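/- Let β > 1. The set E_{0,1} = {x ∈ [0,1] : lim inf_{n→∞} r_n(x,β)/n = 0 and lim sup_{n→∞} r_n(x,β)/n = 1} is residual in [0,1], i.e., its complement is of the first Baire category. -/

import Mathlib

open Filter MeasureTheory Set

noncomputable def betaT (β : ℝ) (x : ℝ) : ℝ := β * x - ⌊β * x⌋

noncomputable def eps (β x : ℝ) (n : ℕ) : ℤ := ⌊β * (betaT β)^[n - 1] x⌋

noncomputable def runLen (β x : ℝ) (n : ℕ) : ℕ :=
  sSup {j | ∃ i, i + j ≤ n ∧ ∀ k < j, eps β x (i + k + 1) = 0}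

def isAdmissible (β : ℝ) (n : ℕ) (ω : ℕ → ℤ) : Prop :=
  ∃ x ∈ Set.Ico (0 : ℝ) 1, ∀ k < n, eps β x (k + 1) = ω k

def cylinder (β : ℝ) (n : ℕ) (ω : ℕ → ℤ) : Set ℝ :=
  {x | x ∈ Set.Ico (0 : ℝ) 1 ∧ ∀ k < n, eps β x (k + 1) = ω k}

def isFull (β : ℝ) (n : ℕ) (ω : ℕ → ℤ) : Prop :=
  MeasureTheory.volume (cylinder β n ω) = ENNReal.ofReal (β ^ (-(n : ℤ)))

open Classical in
noncomputable def epsStar (β : ℝ) : ℕ → ℤ :=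
  if h : ∃ m, 1 ≤ m ∧ eps β 1 m ≠ 0 ∧ ∀ k, m < k → eps β 1 k = 0 then
    fun n =>
      if (n - 1) % Nat.find h + 1 = Nat.find h then eps β 1 (Nat.find h) - 1
      else eps β 1 ((n - 1) % Nat.find h + 1)
  else eps β 1

def lexLt (u v : ℕ → ℤ) : Prop := ∃ j, (∀ k < j, u k = v k) ∧ u j < v j

def lexLe (u v : ℕ → ℤ) : Prop := lexLt u v ∨ u = v

noncomputable def vbeta (β x : ℝ) : ℝ :=
  sSup {v | 0 ≤ v ∧ ∃ᶠ n : ℕ in atTop, (betaT β)^[n] x ≤ β ^ (-((n : ℝ) * v))}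

noncomputable def hatv (β x : ℝ) : ℝ :=
  sSup {v | 0 ≤ v ∧ ∀ᶠ N : ℕ in atTop, ∃ n, 1 ≤ n ∧ n ≤ N ∧ (betaT β)^[n] x ≤ β ^ (-(v * (N : ℝ)))}


section Basics
variable {β : ℝ}

lemma betaT_eq (x : ℝ) : betaT β x = Int.fract (β * x) := rfl

lemma betaT_nonneg (x : ℝ) : 0 ≤ betaT β x := Int.fract_nonneg _

lemma betaT_lt_one (x : ℝ) : betaT β x < 1 := Int.fract_lt_one _

lemma iter_nonneg {x : ℝ} (hx : 0 ≤ x) (j : ℕ) : 0 ≤ (betaT β)^[j] x := by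
  cases j with
  | zero => exact hx
  | succ n => rw [Function.iterate_succ_apply']; exact betaT_nonneg _

lemma iter_mem {x : ℝ} (hx : x ∈ Ico (0:ℝ) 1) (j : ℕ) : (betaT β)^[j] x ∈ Ico (0:ℝ) 1 := by
  cases j with
  | zero => exact hx
  | succ n => rw [Function.iterate_succ_apply']; exact ⟨betaT_nonneg _, betaT_lt_one _⟩

lemma betaT_zero : betaT β 0 = 0 := by simp [betaT]

lemma iter_zero (j : ℕ) : (betaT β)^[j] (0:ℝ) = 0 :=
  Function.iterate_fixed betaT_zero j

lemma iter_eq_zero_of_le {y : ℝ} {N : ℕ} (h : (betaT β)^[N] y = 0) {j : ℕ} (hj : N ≤ j) :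
    (betaT β)^[j] y = 0 := by
  obtain ⟨m, rfl⟩ := Nat.exists_eq_add_of_le hj
  rw [Nat.add_comm, Function.iterate_add_apply, h, iter_zero]

lemma betaT_le (hβ : 0 < β) {w : ℝ} (hw : 0 ≤ w) : betaT β w ≤ β * w := by
  have : (0:ℤ) ≤ ⌊β * w⌋ := Int.floor_nonneg.2 (by positivity)
  have : (0:ℝ) ≤ (⌊β * w⌋ : ℝ) := by exact_mod_cast this
  simp only [betaT]; linarith

lemma iter_le (hβ : 0 < β) {w : ℝ} (hw : 0 ≤ w) (m : ℕ) :
    (betaT β)^[m] w ≤ β ^ m * w := by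
  induction m with
  | zero => simp
  | succ n ih =>
      rw [Function.iterate_succ_apply']
      calc betaT β ((betaT β)^[n] w) ≤ β * (betaT β)^[n] w :=
            betaT_le hβ (iter_nonneg hw n)
        _ ≤ β * (β ^ n * w) := by nlinarith [ih, hβ.le]
        _ = β ^ (n+1) * w := by ring

lemma eps_eq (x : ℝ) (k : ℕ) : eps β x (k+1) = ⌊β * (betaT β)^[k] x⌋ := by
  simp [eps]

lemma eps_shift (x : ℝ) (m k : ℕ) :
    eps β x (m + k + 1) = eps β ((betaT β)^[m] x) (k + 1) := by
  simp only [eps, Nat.add_sub_cancel]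
  rw [Nat.add_comm m k, Function.iterate_add_apply]

lemma eps_zero_of_iter_zero {y : ℝ} {N : ℕ} (h : (betaT β)^[N] y = 0) {k : ℕ} (hk : N ≤ k) :
    eps β y (k+1) = 0 := by
  rw [eps_eq, iter_eq_zero_of_le h hk]
  simp

/-- one-step digit/fract computation -/
lemma floor_step {a r : ℝ} (hr : 0 ≤ r) (hr1 : Int.fract a + r < 1) :
    ⌊a + r⌋ = ⌊a⌋ ∧ Int.fract (a + r) = Int.fract a + r := by
  have h1 : a + r = (⌊a⌋ : ℝ) + (Int.fract a + r) := by
    rw [Int.fract]; ring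
  have h0 : (0:ℝ) ≤ Int.fract a + r := by
    have := Int.fract_nonneg a; linarith
  constructor
  · rw [h1, Int.floor_intCast_add, Int.floor_eq_zero_iff.2 ⟨h0, hr1⟩, add_zero]
  · rw [h1, Int.fract_intCast_add, Int.fract_eq_self.2 ⟨h0, hr1⟩]

end Basics

section RunLen
variable {β : ℝ}

lemma runSet_zero_mem (x : ℝ) (n : ℕ) :
    0 ∈ {j | ∃ i, i + j ≤ n ∧ ∀ k < j, eps β x (i + k + 1) = 0} :=
  ⟨0, by simp, by omega⟩

lemma runSet_bdd (x : ℝ) (n : ℕ) :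
    BddAbove {j | ∃ i, i + j ≤ n ∧ ∀ k < j, eps β x (i + k + 1) = 0} :=
  ⟨n, fun j ⟨i, hi, _⟩ => le_trans (Nat.le_add_left j i) hi⟩

lemma runLen_le_self (x : ℝ) (n : ℕ) : runLen β x n ≤ n :=
  csSup_le ⟨0, runSet_zero_mem x n⟩ (fun j ⟨i, hi, _⟩ => le_trans (Nat.le_add_left j i) hi)

lemma le_runLen (x : ℝ) (n : ℕ) {j i : ℕ} (hi : i + j ≤ n)
    (h : ∀ k < j, eps β x (i + k + 1) = 0) : j ≤ runLen β x n :=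
  le_csSup (runSet_bdd x n) ⟨i, hi, h⟩

lemma runLen_le (x : ℝ) (n B : ℕ)
    (h : ∀ j i, i + j ≤ n → (∀ k < j, eps β x (i + k + 1) = 0) → j ≤ B) :
    runLen β x n ≤ B :=
  csSup_le ⟨0, runSet_zero_mem x n⟩ (fun j ⟨i, hi, hz⟩ => h j i hi hz)

end RunLen


section Perturb
variable {β : ℝ}

lemma perturb (hβ : 1 < β) {y t : ℝ} (hy : y ∈ Ico (0:ℝ) 1) {M : ℕ}
    (hM0 : (betaT β)^[M] y = 0) (ht : t ∈ Ico (0:ℝ) 1)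
    (gap : ∀ j, j < M → (betaT β)^[j] y + (β^M)⁻¹ * β^j ≤ 1) :
    (∀ j, j ≤ M → (betaT β)^[j] (y + (β^M)⁻¹ * t) = (betaT β)^[j] y + (β^M)⁻¹ * β^j * t) ∧
    (∀ k, k < M → eps β (y + (β^M)⁻¹ * t) (k+1) = eps β y (k+1)) := by
  have hβ0 : (0:ℝ) < β := lt_trans zero_lt_one hβ
  have hpM : (0:ℝ) < (β^M)⁻¹ := by positivity
  have ht0 : (0:ℝ) ≤ t := ht.1
  -- the inner remainder bound
  have inner : ∀ j, j + 1 ≤ M →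
      0 ≤ (betaT β)^[j+1] y + (β^M)⁻¹ * β^(j+1) * t ∧
      (betaT β)^[j+1] y + (β^M)⁻¹ * β^(j+1) * t < 1 := by
    intro j hj
    have h0 : 0 ≤ (betaT β)^[j+1] y := iter_nonneg hy.1 _
    have hpt : (0:ℝ) < (β^M)⁻¹ * β^(j+1) := by positivity
    constructor
    · nlinarith [ht.1]
    · rcases lt_or_eq_of_le hj with hlt | heq
      · have := gap (j+1) hlt
        nlinarith [ht.2, ht.1]
      · have hTM : (betaT β)^[j+1] y = 0 := by rw [heq]; exact hM0
        have : (β^M)⁻¹ * β^(j+1) = 1 := by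
          rw [heq]; field_simp
        rw [hTM, this]; simpa using ht.2
  have key : ∀ j, j ≤ M →
      (betaT β)^[j] (y + (β^M)⁻¹ * t) = (betaT β)^[j] y + (β^M)⁻¹ * β^j * t := by
    intro j hj
    induction j with
    | zero => simp
    | succ n ih =>
        have hn : n ≤ M := by omega
        have hih := ih (by omega)
        rw [Function.iterate_succ_apply', hih, betaT_eq]
        have harg : β * ((betaT β)^[n] y + (β^M)⁻¹ * β^n * t)
            = β * (betaT β)^[n] y + (β^M)⁻¹ * β^(n+1) * t := by ring
        rw [harg]
        have hfr : Int.fract (β * (betaT β)^[n] y) = (betaT β)^[n+1] y := by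
          rw [Function.iterate_succ_apply', betaT_eq]
        have hin := inner n hj
        have := (floor_step (a := β * (betaT β)^[n] y) (r := (β^M)⁻¹ * β^(n+1) * t)
          (by positivity) (by rw [hfr]; exact hin.2)).2
        rw [this, hfr, Function.iterate_succ_apply', betaT_eq]
  refine ⟨key, ?_⟩
  intro k hk
  rw [eps_eq, eps_eq, key k (le_of_lt hk)]
  have harg : β * ((betaT β)^[k] y + (β^M)⁻¹ * β^k * t)
      = β * (betaT β)^[k] y + (β^M)⁻¹ * β^(k+1) * t := by ring
  rw [harg]
  have hfr : Int.fract (β * (betaT β)^[k] y) = (betaT β)^[k+1] y := by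
    rw [Function.iterate_succ_apply', betaT_eq]
  exact (floor_step (by positivity) (by rw [hfr]; exact (inner k hk).2)).1

end Perturb

section Append
variable {β : ℝ}

lemma append (hβ : 1 < β) {y : ℝ} (hy : y ∈ Ico (0:ℝ) 1) (N : ℕ)
    (h0 : (betaT β)^[N] y = 0) :
    ∃ M0, N ≤ M0 ∧ 1 ≤ M0 ∧ ∀ M, M0 ≤ M → ∀ t, t ∈ Ico (0:ℝ) 1 →
      (y + (β^M)⁻¹ * t ∈ Ico (0:ℝ) 1) ∧
      ((betaT β)^[M] (y + (β^M)⁻¹ * t) = t) ∧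
      (∀ k, k < M → eps β (y + (β^M)⁻¹ * t) (k+1) = eps β y (k+1)) := by
  have hβ0 : (0:ℝ) < β := lt_trans zero_lt_one hβ
  -- minimal gap over j < N
  have hgap : ∀ j, (0:ℝ) < 1 - (betaT β)^[j] y := fun j => by
    have := (iter_mem (β:=β) hy j).2; linarith
  -- choose n with β⁻¹^n < min gap
  obtain ⟨g, hg0, hgle⟩ : ∃ g : ℝ, 0 < g ∧ ∀ j < N, g ≤ 1 - (betaT β)^[j] y := by
    rcases Nat.eq_zero_or_pos N with h | h
    · exact ⟨1, zero_lt_one, fun j hj => by omega⟩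
    · obtain ⟨j0, hj0, hmin⟩ := Finset.exists_min_image (Finset.range N)
        (fun j => 1 - (betaT β)^[j] y) ⟨0, Finset.mem_range.2 h⟩
      exact ⟨_, hgap j0, fun j hj => hmin j (Finset.mem_range.2 hj)⟩
  obtain ⟨n, hn⟩ : ∃ n : ℕ, (β⁻¹)^n < g :=
    exists_pow_lt_of_lt_one hg0 (inv_lt_one_of_one_lt₀ hβ)
  refine ⟨max (N + n) 1, le_trans (Nat.le_add_right N n) (le_max_left _ _),
    le_max_right _ _, ?_⟩
  intro M hM t ht
  have hMN : N ≤ M := le_trans (le_trans (Nat.le_add_right N n) (le_max_left _ _)) hM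
  have hM0 : (betaT β)^[M] y = 0 := iter_eq_zero_of_le h0 hMN
  have gap : ∀ j, j < M → (betaT β)^[j] y + (β^M)⁻¹ * β^j ≤ 1 := by
    intro j hj
    rcases lt_or_ge j N with hjN | hjN
    · have h1 : (β^M)⁻¹ * β^j ≤ (β⁻¹)^n := by
        rw [inv_pow, ← one_div, ← one_div ((β:ℝ)^n), div_mul_eq_mul_div, one_mul,
          div_le_div_iff₀ (by positivity) (by positivity), one_mul]
        calc β^j * β^n ≤ β^N * β^n := by
              have : β^j ≤ β^N := pow_le_pow_right₀ hβ.le hjN.le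
              nlinarith [pow_pos hβ0 n]
          _ = β^(N+n) := by rw [pow_add]
          _ ≤ β^M := pow_le_pow_right₀ hβ.le (le_trans (le_max_left _ _) hM)
      have h2 := hgle j hjN
      linarith
    · have hz : (betaT β)^[j] y = 0 := iter_eq_zero_of_le h0 hjN
      rw [hz, zero_add]
      rw [← one_div, div_mul_eq_mul_div, div_le_one (by positivity), one_mul]
      exact pow_le_pow_right₀ hβ.le hj.le
  obtain ⟨key, hdig⟩ := perturb hβ hy hM0 ht gap
  have hM1 : 1 ≤ M := le_trans (le_max_right _ _) hM
  have ht0 := ht.1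
  have hy0 := hy.1
  refine ⟨⟨by positivity, ?_⟩, ?_, hdig⟩
  · -- z < 1 via gap at 0
    have hg := gap 0 (by omega)
    simp only [Function.iterate_zero_apply, pow_zero, mul_one] at hg
    have hpos : (0:ℝ) < (β^M)⁻¹ := by positivity
    nlinarith [ht.2]
  · have := key M le_rfl
    rw [hM0, zero_add] at this
    rw [this]
    have : (β^M)⁻¹ * β^M = 1 := by field_simp
    rw [this, one_mul]

end Append

section Trunc
variable {β : ℝ}

lemma trunc (hβ : 1 < β) {x : ℝ} (hx : x ∈ Ico (0:ℝ) 1) (N : ℕ) :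
    ∃ y, y ∈ Ico (0:ℝ) 1 ∧ (betaT β)^[N] y = 0 ∧
      (∀ k, k < N → eps β y (k+1) = eps β x (k+1)) ∧
      x - (β^N)⁻¹ < y ∧ y ≤ x := by
  have hβ0 : (0:ℝ) < β := lt_trans zero_lt_one hβ
  set c : ℝ := (β^N)⁻¹ * (betaT β)^[N] x with hc
  have hTN0 : 0 ≤ (betaT β)^[N] x := iter_nonneg hx.1 N
  have hTN1 : (betaT β)^[N] x < 1 := (iter_mem hx N).2
  have hc0 : 0 ≤ c := by positivity
  -- the remainder bounds needed at each step
  have inner : ∀ j, j ≤ N →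
      0 ≤ (betaT β)^[j] x - (β^N)⁻¹ * β^j * (betaT β)^[N] x ∧
      (betaT β)^[j] x - (β^N)⁻¹ * β^j * (betaT β)^[N] x < 1 := by
    intro j hj
    have hTj1 : (betaT β)^[j] x < 1 := (iter_mem hx j).2
    have hTj0 : 0 ≤ (betaT β)^[j] x := iter_nonneg hx.1 j
    have hfac : (0:ℝ) ≤ (β^N)⁻¹ * β^j := by positivity
    constructor
    · -- (β^N)⁻¹ β^j T^N x ≤ T^j x
      have hiter : (betaT β)^[N] x ≤ β^(N - j) * (betaT β)^[j] x := by
        have : (betaT β)^[N] x = (betaT β)^[N - j] ((betaT β)^[j] x) := by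
          rw [← Function.iterate_add_apply, Nat.sub_add_cancel hj]
        rw [this]
        exact iter_le hβ0 hTj0 (N - j)
      have hmul : (β^N)⁻¹ * β^j * (β^(N-j) * (betaT β)^[j] x) = (betaT β)^[j] x := by
        rw [← mul_assoc, mul_assoc ((β^N)⁻¹) (β^j) (β^(N-j)), ← pow_add,
          Nat.add_sub_cancel' hj]
        field_simp
      nlinarith [mul_le_mul_of_nonneg_left hiter hfac]
    · nlinarith
  have key : ∀ j, j ≤ N →
      (betaT β)^[j] (x - c) = (betaT β)^[j] x - (β^N)⁻¹ * β^j * (betaT β)^[N] x := by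
    intro j hj
    induction j with
    | zero => simp [hc]
    | succ n ih =>
        have hih := ih (by omega)
        rw [Function.iterate_succ_apply', hih, betaT_eq]
        have harg : β * ((betaT β)^[n] x - (β^N)⁻¹ * β^n * (betaT β)^[N] x)
            = β * (betaT β)^[n] x - (β^N)⁻¹ * β^(n+1) * (betaT β)^[N] x := by ring
        rw [harg]
        have hfr : Int.fract (β * (betaT β)^[n] x) = (betaT β)^[n+1] x := by
          rw [Function.iterate_succ_apply', betaT_eq]
        -- a - b = ⌊a⌋ + (fract a - b), with fract a - b ∈ [0,1)
        have hin := inner (n+1) hj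
        have heq : β * (betaT β)^[n] x - (β^N)⁻¹ * β^(n+1) * (betaT β)^[N] x
            = (⌊β * (betaT β)^[n] x⌋ : ℝ) +
              ((betaT β)^[n+1] x - (β^N)⁻¹ * β^(n+1) * (betaT β)^[N] x) := by
          rw [← hfr, Int.fract]; ring
        rw [heq, Int.fract_intCast_add, Int.fract_eq_self.2 ⟨hin.1, hin.2⟩,
          Function.iterate_succ_apply', betaT_eq, hfr]
  have hdig : ∀ k, k < N → eps β (x - c) (k+1) = eps β x (k+1) := by
    intro k hk
    rw [eps_eq, eps_eq, key k (le_of_lt hk)]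
    have harg : β * ((betaT β)^[k] x - (β^N)⁻¹ * β^k * (betaT β)^[N] x)
        = β * (betaT β)^[k] x - (β^N)⁻¹ * β^(k+1) * (betaT β)^[N] x := by ring
    have hfr : Int.fract (β * (betaT β)^[k] x) = (betaT β)^[k+1] x := by
      rw [Function.iterate_succ_apply', betaT_eq]
    have hin := inner (k+1) hk
    have heq : β * (betaT β)^[k] x - (β^N)⁻¹ * β^(k+1) * (betaT β)^[N] x
        = (⌊β * (betaT β)^[k] x⌋ : ℝ) +
          ((betaT β)^[k+1] x - (β^N)⁻¹ * β^(k+1) * (betaT β)^[N] x) := by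
      rw [← hfr, Int.fract]; ring
    rw [harg, heq, Int.floor_intCast_add, Int.floor_eq_zero_iff.2 ⟨hin.1, hin.2⟩, add_zero]
  have hzero : (betaT β)^[N] (x - c) = 0 := by
    rw [key N le_rfl]
    have : (β^N)⁻¹ * β^N = 1 := by field_simp
    rw [this, one_mul, sub_self]
  have h00 := inner 0 (Nat.zero_le _)
  simp only [Function.iterate_zero_apply, pow_zero, mul_one] at h00
  refine ⟨x - c, ⟨by simpa [hc] using h00.1, ?_⟩, hzero, hdig, ?_, by simpa using hc0⟩
  · have : x - c ≤ x := by linarith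
    linarith [hx.2]
  · have : c < (β^N)⁻¹ := by
      have hp : (0:ℝ) < (β^N)⁻¹ := by positivity
      calc c = (β^N)⁻¹ * (betaT β)^[N] x := hc
        _ < (β^N)⁻¹ * 1 := by nlinarith
        _ = (β^N)⁻¹ := mul_one _
    linarith

end Trunc

/-- points having some time `n ≥ N` with run ratio ≥ 1 - 1/k -/
def Aset (β : ℝ) (k N : ℕ) : Set ℝ :=
  {x | ∃ n, N ≤ n ∧ (1 - 1/(k:ℝ)) ≤ (runLen β x n : ℝ) / n}

/-- points having some time `n ≥ N` with run ratio ≤ 1/k -/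
def Bset (β : ℝ) (k N : ℕ) : Set ℝ :=
  {x | ∃ n, N ≤ n ∧ 1 ≤ n ∧ (runLen β x n : ℝ) / n ≤ 1/(k:ℝ)}

section DenseA
variable {β : ℝ}

lemma denseA (hβ : 1 < β) (k N : ℕ) (hk : 1 ≤ k) {x : ℝ} (hx : x ∈ Ico (0:ℝ) 1)
    {ε : ℝ} (hε : 0 < ε) :
    ∃ z ∈ Icc (0:ℝ) 1, z ∈ interior (Aset β k N) ∧ |z - x| < ε := by
  have hβ0 : (0:ℝ) < β := lt_trans zero_lt_one hβ
  obtain ⟨N', hN'⟩ : ∃ n : ℕ, (β^n)⁻¹ < ε := by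
    obtain ⟨n, hn⟩ := exists_pow_lt_of_lt_one hε (inv_lt_one_of_one_lt₀ hβ)
    exact ⟨n, by rwa [← inv_pow]⟩
  obtain ⟨y, hy, hy0, hydig, hylb, hyub⟩ := trunc hβ hx N'
  obtain ⟨M0, hM0N, hM01, happ⟩ := append hβ hy N' hy0
  set M := max M0 (max (k * N') N) with hMdef
  have hMM0 : M0 ≤ M := le_max_left _ _
  have hMk : k * N' ≤ M := le_trans (le_max_left _ _) (le_max_right _ _)
  have hMN : N ≤ M := le_trans (le_max_right _ _) (le_max_right _ _)
  have hMN' : N' ≤ M := le_trans hM0N hMM0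
  have hM1 : 1 ≤ M := le_trans hM01 hMM0
  have hMpos : (0:ℝ) < (M:ℝ) := by exact_mod_cast hM1
  have hsub : Ioo y (y + (β^M)⁻¹) ⊆ Aset β k N := by
    intro w hw
    set t : ℝ := (w - y) * β^M with htdef
    have hts : w = y + (β^M)⁻¹ * t := by
      rw [htdef]; field_simp; ring
    have ht : t ∈ Ico (0:ℝ) 1 := by
      have hbp : (0:ℝ) < β^M := by positivity
      constructor
      · have := hw.1; nlinarith
      · have h2 := hw.2
        have : w - y < (β^M)⁻¹ := by linarith
        calc t = (w - y) * β^M := rfl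
          _ < (β^M)⁻¹ * β^M := by nlinarith
          _ = 1 := by field_simp
    obtain ⟨hwmem, hwiter, hwdig⟩ := happ M hMM0 t ht
    rw [← hts] at hwdig
    have hrun : (M - N' : ℕ) ≤ runLen β w M := by
      apply le_runLen w M (i := N') (by omega)
      intro k' hk'
      rw [hwdig (N' + k') (by omega)]
      exact eps_zero_of_iter_zero hy0 (Nat.le_add_right _ _)
    refine ⟨M, hMN, ?_⟩
    have hkpos : (0:ℝ) < (k:ℝ) := by exact_mod_cast hk
    have hcast : ((M - N' : ℕ) : ℝ) = (M:ℝ) - (N':ℝ) := by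
      rw [Nat.cast_sub hMN']
    have hrunR : (M:ℝ) - (N':ℝ) ≤ (runLen β w M : ℝ) := by
      rw [← hcast]; exact_mod_cast hrun
    have hkN' : (k:ℝ) * (N':ℝ) ≤ (M:ℝ) := by exact_mod_cast hMk
    rw [le_div_iff₀ hMpos]
    have h1k : 1/(k:ℝ) * (k:ℝ) = 1 := by field_simp
    nlinarith [hrunR, hkN', hkpos, hMpos]
  have hIsub : Ioo y (y + (β^M)⁻¹) ⊆ interior (Aset β k N) :=
    interior_maximal hsub isOpen_Ioo
  have hhalf : (1/2 : ℝ) ∈ Ico (0:ℝ) 1 := by norm_num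
  obtain ⟨hzmem, _, _⟩ := happ M hMM0 (1/2) hhalf
  set z := y + (β^M)⁻¹ * (1/2) with hz
  clear_value z
  have hbp : (0:ℝ) < (β^M)⁻¹ := by positivity
  have hzin : z ∈ Ioo y (y + (β^M)⁻¹) := ⟨by rw [hz]; nlinarith, by rw [hz]; nlinarith⟩
  refine ⟨z, Ico_subset_Icc_self hzmem, hIsub hzin, ?_⟩
  have hMle : (β^M)⁻¹ ≤ (β^(N'):ℝ)⁻¹ := by
    apply inv_anti₀ (by positivity)
    exact pow_le_pow_right₀ hβ.le hMN'
  rw [abs_sub_lt_iff]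
  constructor
  · -- z - x < ε
    have : z < y + (β^(N'):ℝ)⁻¹ := by rw [hz]; nlinarith
    linarith
  · -- x - z < ε
    have : y < z := hzin.1
    linarith

end DenseA

noncomputable def chain (β : ℝ) (P : ℕ) : ℕ → ℝ → ℝ
  | 0, t => t
  | (r+1), t => β⁻¹ + (β^P)⁻¹ * chain β P r t

section Chain
variable {β : ℝ}

lemma unit_mem (hβ : 1 < β) : β⁻¹ ∈ Ico (0:ℝ) 1 :=
  ⟨by positivity, inv_lt_one_of_one_lt₀ hβ⟩

lemma unit_iter (hβ : 1 < β) : (betaT β)^[1] β⁻¹ = 0 := by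
  have hβ0 : (0:ℝ) < β := lt_trans zero_lt_one hβ
  simp [betaT_eq, mul_inv_cancel₀ hβ0.ne', Int.fract_one]

lemma unit_eps (hβ : 1 < β) : eps β β⁻¹ 1 = 1 := by
  have hβ0 : (0:ℝ) < β := lt_trans zero_lt_one hβ
  simp [eps, mul_inv_cancel₀ hβ0.ne']

lemma chain_spec (hβ : 1 < β) {P : ℕ} (hP1 : 1 ≤ P)
    (hPapp : ∀ t, t ∈ Ico (0:ℝ) 1 →
      (β⁻¹ + (β^P)⁻¹ * t ∈ Ico (0:ℝ) 1) ∧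
      ((betaT β)^[P] (β⁻¹ + (β^P)⁻¹ * t) = t) ∧
      (∀ k, k < P → eps β (β⁻¹ + (β^P)⁻¹ * t) (k+1) = eps β β⁻¹ (k+1))) :
    ∀ r t, t ∈ Ico (0:ℝ) 1 →
      chain β P r t ∈ Ico (0:ℝ) 1 ∧
      (betaT β)^[r*P] (chain β P r t) = t ∧
      (∀ q, q < r → eps β (chain β P r t) (q*P + 1) = 1) ∧
      chain β P r t = chain β P r 0 + (β^(r*P))⁻¹ * t := by
  intro r
  induction r with
  | zero =>
      intro t ht
      refine ⟨ht, by simp [chain], fun q hq => by omega, by simp [chain]⟩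
  | succ r ih =>
      intro t ht
      obtain ⟨hcm, hci, hcd, hca⟩ := ih t ht
      obtain ⟨hzm, hzi, hzd⟩ := hPapp (chain β P r t) hcm
      have hchain : chain β P (r+1) t = β⁻¹ + (β^P)⁻¹ * chain β P r t := rfl
      refine ⟨by rw [hchain]; exact hzm, ?_, ?_, ?_⟩
      · rw [hchain]
        have : (r+1)*P = r*P + P := by ring
        rw [this, Function.iterate_add_apply, hzi, hci]
      · intro q hq
        rw [hchain]
        match q with
        | 0 =>
            rw [Nat.zero_mul, hzd 0 (by omega), unit_eps hβ]
        | (q'+1) =>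
            have hpos : (q'+1)*P + 1 = P + q'*P + 1 := by ring
            rw [hpos, eps_shift, hzi, hcd q' (by omega)]
      · have hc0 := (ih 0 ⟨le_refl 0, zero_lt_one⟩).2.2.2
        rw [hchain, hca]
        have h0chain : chain β P (r+1) 0 = β⁻¹ + (β^P)⁻¹ * chain β P r 0 := rfl
        rw [h0chain]
        have : ((β:ℝ)^((r+1)*P))⁻¹ = (β^P)⁻¹ * (β^(r*P))⁻¹ := by
          rw [← mul_inv, ← pow_add]
          congr 1
          ring
        rw [this]
        ring

end Chain

lemma find_marker {M P i j rep : ℕ} (hP : 1 ≤ P) (hrep : 1 ≤ rep)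
    (hij : i + j ≤ M + rep * P) (hj : M + P + 1 ≤ j) :
    ∃ q, q < rep ∧ i ≤ M + q * P ∧ M + q * P < i + j := by
  have hex : ∃ q, i ≤ M + q * P := ⟨i, by nlinarith⟩
  classical
  have hq1 : i ≤ M + Nat.find hex * P := Nat.find_spec hex
  have hrepP : i + P + 1 ≤ rep * P := by nlinarith
  rcases Nat.eq_zero_or_pos (Nat.find hex) with hq | hq
  · rw [hq] at hq1
    refine ⟨0, hrep, by simpa using hq1, ?_⟩
    simp only [Nat.zero_mul, Nat.add_zero]
    omega
  · obtain ⟨q', hq'⟩ : ∃ q', Nat.find hex = q' + 1 := ⟨Nat.find hex - 1, by omega⟩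
    rw [hq'] at hq1
    have hmin : ¬ i ≤ M + q' * P := Nat.find_min hex (by omega)
    push_neg at hmin
    have hup : M + (q'+1) * P < i + P := by nlinarith
    have hqq : (q'+1) * P < rep * P := by nlinarith
    have hqrep : q' + 1 < rep := by
      by_contra hcon
      push_neg at hcon
      exact absurd (Nat.mul_le_mul_right P hcon) (by omega)
    exact ⟨q'+1, hqrep, hq1, by omega⟩

section DenseB
variable {β : ℝ}

lemma denseB (hβ : 1 < β) (k N : ℕ) (hk : 1 ≤ k) {x : ℝ} (hx : x ∈ Ico (0:ℝ) 1)
    {ε : ℝ} (hε : 0 < ε) :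
    ∃ z ∈ Icc (0:ℝ) 1, z ∈ interior (Bset β k N) ∧ |z - x| < ε := by
  have hβ0 : (0:ℝ) < β := lt_trans zero_lt_one hβ
  -- period for the unit block
  obtain ⟨P, hP1', hP1, happU⟩ := append hβ (unit_mem hβ) 1 (unit_iter hβ)
  have hPapp := happU P le_rfl
  have hcs := chain_spec hβ hP1 hPapp
  -- approximation scale
  obtain ⟨N', hN'⟩ : ∃ n : ℕ, (β^n)⁻¹ < ε := by
    obtain ⟨n, hn⟩ := exists_pow_lt_of_lt_one hε (inv_lt_one_of_one_lt₀ hβ)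
    exact ⟨n, by rwa [← inv_pow]⟩
  obtain ⟨y, hy, hy0, hydig, hylb, hyub⟩ := trunc hβ hx N'
  obtain ⟨M, hMN', hM1, happY⟩ := append hβ hy N' hy0
  set rep := max 1 (max N (k * (M + P))) with hrepdef
  have hrep1 : 1 ≤ rep := le_max_left _ _
  have hrepN : N ≤ rep := le_trans (le_max_left _ _) (le_max_right _ _)
  have hrepk : k * (M + P) ≤ rep := le_trans (le_max_right _ _) (le_max_right _ _)
  set n := M + rep * P with hndef
  have hrepn : rep ≤ n := by
    calc rep = rep * 1 := (Nat.mul_one rep).symm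
      _ ≤ rep * P := Nat.mul_le_mul_left rep hP1
      _ ≤ M + rep * P := Nat.le_add_left _ _
  have hn1 : 1 ≤ n := le_trans hrep1 hrepn
  have hnN : N ≤ n := le_trans hrepN hrepn
  have hnpos : (0:ℝ) < (n:ℝ) := by exact_mod_cast hn1
  set Z0 : ℝ := y + (β^M)⁻¹ * chain β P rep 0 with hZ0
  clear_value Z0
  have hpown : ((β:ℝ)^n)⁻¹ = (β^M)⁻¹ * (β^(rep*P))⁻¹ := by
    rw [← mul_inv, ← pow_add, hndef]
  -- membership of the whole open interval
  have hsub : Ioo Z0 (Z0 + (β^n)⁻¹) ⊆ Bset β k N := by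
    intro w hw
    set t : ℝ := (w - Z0) * β^n with htdef
    clear_value t
    have hbp : (0:ℝ) < β^n := by positivity
    have ht : t ∈ Ico (0:ℝ) 1 := by
      constructor
      · rw [htdef]
        exact mul_nonneg (le_of_lt (sub_pos.2 hw.1)) hbp.le
      · have h3 : w - Z0 < (β^n)⁻¹ := by linarith [hw.2]
        calc t = (w - Z0) * β^n := htdef
          _ < (β^n)⁻¹ * β^n := mul_lt_mul_of_pos_right h3 hbp
          _ = 1 := by field_simp
    obtain ⟨hcm, hci, hcd, hca⟩ := hcs rep t ht
    set Ct := chain β P rep t with hCt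
    clear_value Ct
    set C0 := chain β P rep 0 with hC0
    clear_value C0
    have hwt : w = y + (β^M)⁻¹ * Ct := by
      have hw' : w = Z0 + (β^n)⁻¹ * t := by
        rw [htdef]; field_simp; ring
      rw [hca, hw', hZ0, hpown]; ring
    obtain ⟨hwm, hwi, hwd⟩ := happY M le_rfl Ct hcm
    rw [← hwt] at hwi hwd
    -- markers of w
    have hmark : ∀ q, q < rep → eps β w (M + q*P + 1) = 1 := by
      intro q hq
      rw [eps_shift w M (q*P), hwi]
      exact hcd q hq
    -- run length bound
    have hrun : runLen β w n ≤ M + P := by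
      apply runLen_le
      intro j i hij hz
      by_contra hcon
      push_neg at hcon
      have hj : M + P + 1 ≤ j := hcon
      obtain ⟨q, hqrep, hql, hqu⟩ := find_marker hP1 hrep1 (hndef ▸ hij) hj
      have := hz (M + q*P - i) (by omega)
      rw [show i + (M + q*P - i) + 1 = M + q*P + 1 by omega] at this
      rw [hmark q hqrep] at this
      exact one_ne_zero this
    refine ⟨n, hnN, hn1, ?_⟩
    have hkpos : (0:ℝ) < (k:ℝ) := by exact_mod_cast hk
    rw [div_le_div_iff₀ hnpos hkpos]
    have h1 : (runLen β w n : ℝ) ≤ (M:ℝ) + (P:ℝ) := by exact_mod_cast hrun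
    have h2 : (k:ℝ) * ((M:ℝ) + (P:ℝ)) ≤ (n:ℝ) := by
      have : (k * (M + P) : ℕ) ≤ n := le_trans hrepk hrepn
      exact_mod_cast this
    nlinarith [(by positivity : (0:ℝ) ≤ (runLen β w n : ℝ))]
  have hIsub : Ioo Z0 (Z0 + (β^n)⁻¹) ⊆ interior (Bset β k N) :=
    interior_maximal hsub isOpen_Ioo
  -- the witness point
  have hhalf : (1/2 : ℝ) ∈ Ico (0:ℝ) 1 := by norm_num
  obtain ⟨hcm2, _, _, hca2⟩ := hcs rep (1/2) hhalf
  obtain ⟨hzm, _, _⟩ := happY M le_rfl (chain β P rep (1/2)) hcm2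
  set Ch := chain β P rep (1/2) with hCh
  clear_value Ch
  set C0 := chain β P rep 0 with hC0
  clear_value C0
  set z : ℝ := y + (β^M)⁻¹ * Ch with hzdef
  clear_value z
  have hbrp : (0:ℝ) < (β^(rep*P):ℝ)⁻¹ := by positivity
  have hbM : (0:ℝ) < (β^M:ℝ)⁻¹ := by positivity
  have hbn : (0:ℝ) < (β^n:ℝ)⁻¹ := by positivity
  have hzeq : z = Z0 + (β^n)⁻¹ * (1/2) := by
    rw [hzdef, hca2, hZ0, hpown]; ring
  have hzin : z ∈ Ioo Z0 (Z0 + (β^n)⁻¹) := by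
    rw [hzeq]; constructor <;> [linarith; linarith]
  refine ⟨z, Ico_subset_Icc_self hzm, hIsub hzin, ?_⟩
  have hchalf01 : Ch ∈ Ico (0:ℝ) 1 := hcm2
  have hMle : ((β:ℝ)^M)⁻¹ ≤ ((β:ℝ)^(N'))⁻¹ := by
    apply inv_anti₀ (by positivity)
    exact pow_le_pow_right₀ hβ.le hMN'
  have hzy : y ≤ z ∧ z < y + ((β:ℝ)^M)⁻¹ := by
    constructor
    · rw [hzdef]
      linarith [mul_nonneg hbM.le hchalf01.1]
    · rw [hzdef]
      linarith [mul_lt_of_lt_one_right hbM hchalf01.2]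
  rw [abs_sub_lt_iff]
  constructor
  · have : z < y + ((β:ℝ)^(N'))⁻¹ := lt_of_lt_of_le hzy.2 (by linarith)
    linarith
  · linarith [hzy.1]

end DenseB

section LimsupLiminf

/-- run ratio function bounds -/
lemma ratio_bounds (β : ℝ) (x : ℝ) (n : ℕ) :
    0 ≤ (runLen β x n : ℝ) / n ∧ (runLen β x n : ℝ) / n ≤ 1 := by
  constructor
  · positivity
  · rcases Nat.eq_zero_or_pos n with h | h
    · simp [h]
    · have hn : (0:ℝ) < n := by exact_mod_cast h
      rw [div_le_one hn]
      exact_mod_cast runLen_le_self x n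

lemma limsup_eq_one_of {f : ℕ → ℝ} (hb : ∀ n, 0 ≤ f n ∧ f n ≤ 1)
    (H : ∀ k : ℕ, ∀ N : ℕ, ∃ n, N ≤ n ∧ 1 - 1/((k:ℝ)+1) ≤ f n) :
    Filter.limsup f Filter.atTop = 1 := by
  have hbd : Filter.IsBoundedUnder (· ≤ ·) Filter.atTop f :=
    Filter.isBoundedUnder_of ⟨1, fun n => (hb n).2⟩
  have hbd' : Filter.IsBoundedUnder (· ≥ ·) Filter.atTop f :=
    Filter.isBoundedUnder_of ⟨0, fun n => (hb n).1⟩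
  refine le_antisymm ?_ ?_
  · exact Filter.limsup_le_of_le hbd'.isCoboundedUnder_le
      (Filter.Eventually.of_forall fun n => (hb n).2)
  · -- 1 ≤ limsup
    have h1 : ∀ k : ℕ, 1 - 1/((k:ℝ)+1) ≤ Filter.limsup f Filter.atTop := by
      intro k
      apply Filter.le_limsup_of_frequently_le _ hbd
      rw [Filter.frequently_atTop]
      intro N
      obtain ⟨n, hn1, hn2⟩ := H k N
      exact ⟨n, hn1, hn2⟩
    apply le_of_forall_pos_le_add
    intro ε hε
    obtain ⟨k, hk⟩ := exists_nat_one_div_lt hε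
    have := h1 k
    linarith

lemma liminf_eq_zero_of {f : ℕ → ℝ} (hb : ∀ n, 0 ≤ f n ∧ f n ≤ 1)
    (H : ∀ k : ℕ, ∀ N : ℕ, ∃ n, N ≤ n ∧ f n ≤ 1/((k:ℝ)+1)) :
    Filter.liminf f Filter.atTop = 0 := by
  have hbd : Filter.IsBoundedUnder (· ≤ ·) Filter.atTop f :=
    Filter.isBoundedUnder_of ⟨1, fun n => (hb n).2⟩
  have hbd' : Filter.IsBoundedUnder (· ≥ ·) Filter.atTop f :=
    Filter.isBoundedUnder_of ⟨0, fun n => (hb n).1⟩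
  refine le_antisymm ?_ ?_
  · -- liminf ≤ 0
    have h1 : ∀ k : ℕ, Filter.liminf f Filter.atTop ≤ 1/((k:ℝ)+1) := by
      intro k
      apply Filter.liminf_le_of_frequently_le _ hbd'
      rw [Filter.frequently_atTop]
      intro N
      obtain ⟨n, hn1, hn2⟩ := H k N
      exact ⟨n, hn1, hn2⟩
    by_contra hcon
    push_neg at hcon
    obtain ⟨k, hk⟩ := exists_nat_one_div_lt hcon
    have := h1 k
    linarith
  · exact Filter.le_liminf_of_le hbd.isCoboundedUnder_ge
      (Filter.Eventually.of_forall fun n => (hb n).1)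

end LimsupLiminf

section Assembly
variable {β : ℝ}

lemma dense_pre {S : Set ℝ}
    (h : ∀ x ∈ Ico (0:ℝ) 1, ∀ ε : ℝ, 0 < ε → ∃ z ∈ Icc (0:ℝ) 1, z ∈ S ∧ |z - x| < ε) :
    Dense ((fun p : (Icc (0:ℝ) 1) => (p:ℝ)) ⁻¹' S) := by
  rw [Metric.dense_iff]
  intro p r hr
  have hp0 : (0:ℝ) ≤ (p:ℝ) := p.2.1
  have hp1 : (p:ℝ) ≤ 1 := p.2.2
  rcases lt_or_eq_of_le hp1 with hlt | heq
  · obtain ⟨z, hzI, hzS, hzd⟩ := h p ⟨hp0, hlt⟩ r hr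
    refine ⟨⟨z, hzI⟩, ?_, hzS⟩
    rw [Metric.mem_ball, Subtype.dist_eq, Real.dist_eq]
    exact hzd
  · set δ : ℝ := min (r/2) (1/2) with hδ
    have hδ0 : 0 < δ := lt_min (by linarith) (by norm_num)
    have hδr : δ ≤ r/2 := min_le_left _ _
    have hδh : δ ≤ 1/2 := min_le_right _ _
    have hx : 1 - δ ∈ Ico (0:ℝ) 1 := ⟨by linarith, by linarith⟩
    obtain ⟨z, hzI, hzS, hzd⟩ := h (1 - δ) hx (r/2) (by linarith)
    refine ⟨⟨z, hzI⟩, ?_, hzS⟩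
    rw [Metric.mem_ball, Subtype.dist_eq, Real.dist_eq,
      show ((⟨z, hzI⟩ : Icc (0:ℝ) 1) : ℝ) = z from rfl, heq]
    rw [abs_sub_lt_iff] at hzd ⊢
    constructor <;> [linarith [hzd.1]; linarith [hzd.2]]

lemma residual_good (hβ : 1 < β) :
    {x : Icc (0:ℝ) 1 |
      Filter.liminf (fun n : ℕ => (runLen β (x : ℝ) n : ℝ) / n) Filter.atTop = 0 ∧
      Filter.limsup (fun n : ℕ => (runLen β (x : ℝ) n : ℝ) / n) Filter.atTop = 1}
      ∈ residual (Icc (0:ℝ) 1) := by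
  set c : Icc (0:ℝ) 1 → ℝ := fun p => (p:ℝ) with hc
  have hA : ∀ kN : ℕ × ℕ, (c ⁻¹' interior (Aset β (kN.1+1) kN.2)) ∈ residual (Icc (0:ℝ) 1) := by
    intro kN
    apply residual_of_dense_open
    · exact isOpen_interior.preimage continuous_subtype_val
    · exact dense_pre fun x hx ε hε => by
        obtain ⟨z, h1, h2, h3⟩ := denseA hβ (kN.1+1) kN.2 (Nat.le_add_left 1 kN.1) hx hε
        exact ⟨z, h1, h2, h3⟩
  have hB : ∀ kN : ℕ × ℕ, (c ⁻¹' interior (Bset β (kN.1+1) kN.2)) ∈ residual (Icc (0:ℝ) 1) := by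
    intro kN
    apply residual_of_dense_open
    · exact isOpen_interior.preimage continuous_subtype_val
    · exact dense_pre fun x hx ε hε => by
        obtain ⟨z, h1, h2, h3⟩ := denseB hβ (kN.1+1) kN.2 (Nat.le_add_left 1 kN.1) hx hε
        exact ⟨z, h1, h2, h3⟩
  have hGA : (⋂ kN : ℕ × ℕ, c ⁻¹' interior (Aset β (kN.1+1) kN.2)) ∈ residual (Icc (0:ℝ) 1) :=
    (countable_iInter_mem).2 hA
  have hGB : (⋂ kN : ℕ × ℕ, c ⁻¹' interior (Bset β (kN.1+1) kN.2)) ∈ residual (Icc (0:ℝ) 1) :=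
    (countable_iInter_mem).2 hB
  apply Filter.mem_of_superset (Filter.inter_mem hGA hGB)
  rintro p ⟨hpA, hpB⟩
  simp only [Set.mem_iInter] at hpA hpB
  have hmemA : ∀ k N : ℕ, (p:ℝ) ∈ Aset β (k+1) N := fun k N =>
    interior_subset (hpA (k, N))
  have hmemB : ∀ k N : ℕ, (p:ℝ) ∈ Bset β (k+1) N := fun k N =>
    interior_subset (hpB (k, N))
  have hb := ratio_bounds β (p:ℝ)
  constructor
  · apply liminf_eq_zero_of hb
    intro k N
    obtain ⟨n, hn1, _, hn3⟩ := hmemB k N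
    refine ⟨n, hn1, ?_⟩
    convert hn3 using 2
    push_cast
    ring
  · apply limsup_eq_one_of hb
    intro k N
    obtain ⟨n, hn1, hn2⟩ := hmemA k N
    refine ⟨n, hn1, ?_⟩
    convert hn2 using 3
    push_cast
    ring

end Assembly


theorem stmt18 (β : ℝ) (hβ : 1 < β) :
    IsMeagre {x : Set.Icc (0 : ℝ) 1 |
      ¬ (Filter.liminf (fun n : ℕ => (runLen β (x : ℝ) n : ℝ) / n) Filter.atTop = 0 ∧
         Filter.limsup (fun n : ℕ => (runLen β (x : ℝ) n : ℝ) / n) Filter.atTop = 1)} := by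
  unfold IsMeagre
  have hcompl : {x : Icc (0:ℝ) 1 |
      ¬ (Filter.liminf (fun n : ℕ => (runLen β (x : ℝ) n : ℝ) / n) Filter.atTop = 0 ∧
         Filter.limsup (fun n : ℕ => (runLen β (x : ℝ) n : ℝ) / n) Filter.atTop = 1)}ᶜ =
      {x : Icc (0:ℝ) 1 |
      (Filter.liminf (fun n : ℕ => (runLen β (x : ℝ) n : ℝ) / n) Filter.atTop = 0 ∧
         Filter.limsup (fun n : ℕ => (runLen β (x : ℝ) n : ℝ) / n) Filter.atTop = 1)} := by
    ext q; simp
  rw [hcompl]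
  exact residual_good hβ
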